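/- arXiv:1707.03087 — 3 statements merged into one kernel-verified Lean document; each statement's English description precedes it below -/
import Mathlib

section
/- Let p, q > 1 be real numbers with 1/p + 1/q = 1. Then the function t ↦ ∫₀^∞ dx / (x^(1/p) · (1 + (x+t)²)^(1/q)) is bounded on ℝ; explicitly, for all t ∈ ℝ, ∫₀^∞ dx / (x^(1/p) (1 + (x+t)²)^(1/q)) ≤ 2p²/((2p-1)(p-1)) + (2/(q+1)) ∫_{-∞}^∞ dx / (1+x²)^((q+1)/(2q)). -/
open MeasureTheory Set
open scoped ENNReal NNReal

theorem stmt0 (p q : ℝ) (hp : 1 < p) (hq : 1 < q) (hpq : 1/p + 1/q = 1) (t : ℝ) :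
    ∫⁻ x in Ioi (0:ℝ), ENNReal.ofReal (1 / (x ^ (1/p) * (1 + (x + t)^2) ^ (1/q))) ≤
      ENNReal.ofReal (2 * p^2 / ((2*p - 1) * (p - 1))) +
        ENNReal.ofReal (2 / (q + 1)) *
          ∫⁻ x : ℝ, ENNReal.ofReal (1 / (1 + x^2) ^ ((q + 1) / (2*q))) := by
  have hp0 : (0:ℝ) < p := by linarith
  have hq0 : (0:ℝ) < q := by linarith
  have hq1 : q - 1 ≠ 0 := by intro h; simp [show q = 1 by linarith] at hq
  have hq1' : q + 1 ≠ 0 := by positivity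
  -- basic relation : p + q = p * q
  have hpq' : p + q = p * q := by
    have h1 : p ≠ 0 := ne_of_gt hp0
    have h2 : q ≠ 0 := ne_of_gt hq0
    field_simp at hpq
    linarith
  -- 1/p = (q-1)/q
  have hinvp : 1/p = (q - 1)/q := by
    field_simp
    nlinarith [hpq']
  -- conjugate exponents used in Young's inequality
  have hconj : Real.HolderConjugate ((q+1)/(q-1)) ((q+1)/2) := by
    constructor
    · rw [inv_one, inv_div, inv_div, ← add_div, div_eq_one_iff_eq hq1']; ring
    · exact div_pos (by linarith) (by linarith)
    · positivity
  -- the integrand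
  set f : ℝ → ℝ≥0∞ := fun x => ENNReal.ofReal (1 / (x ^ (1/p) * (1 + (x + t)^2) ^ (1/q)))
    with hf
  -- the two bounding functions on (1, ∞)
  set g₁ : ℝ → ℝ≥0∞ := fun x => ENNReal.ofReal ((q-1)/(q+1) * x ^ (-((q+1)/q))) with hg₁
  set g₂ : ℝ → ℝ≥0∞ :=
    fun x => ENNReal.ofReal (2/(q+1) * (1 + (x + t)^2) ^ (-((q+1)/(2*q)))) with hg₂
  have hg₁m : Measurable g₁ := by
    apply Measurable.ennreal_ofReal
    exact measurable_const.mul (measurable_id.pow measurable_const)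
  -- Step 1 : bound on (0,1]
  have piece1 : ∫⁻ x in Ioc (0:ℝ) 1, f x ≤ ENNReal.ofReal (p/(p-1)) := by
    have hmono : ∀ x ∈ Ioc (0:ℝ) 1, f x ≤ ENNReal.ofReal (x ^ (-(1/p))) := by
      intro x hx
      have hx0 : 0 < x := hx.1
      apply ENNReal.ofReal_le_ofReal
      rw [Real.rpow_neg hx0.le, ← one_div]
      have hK : (1:ℝ) ≤ (1 + (x + t)^2) ^ (1/q) :=
        Real.one_le_rpow (by nlinarith [sq_nonneg (x+t)]) (by positivity)
      have hxp : (0:ℝ) < x ^ (1/p) := Real.rpow_pos_of_pos hx0 _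
      apply one_div_le_one_div_of_le hxp
      calc x ^ (1/p) = x ^ (1/p) * 1 := by ring
        _ ≤ x ^ (1/p) * (1 + (x + t)^2) ^ (1/q) := by
            apply mul_le_mul_of_nonneg_left hK hxp.le
    calc ∫⁻ x in Ioc (0:ℝ) 1, f x ≤ ∫⁻ x in Ioc (0:ℝ) 1, ENNReal.ofReal (x ^ (-(1/p))) :=
          setLIntegral_mono (Measurable.ennreal_ofReal (measurable_id.pow measurable_const)) hmono
      _ = ENNReal.ofReal (∫ x in Ioc (0:ℝ) 1, x ^ (-(1/p))) := by
          rw [ofReal_integral_eq_lintegral_ofReal]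
          · exact (intervalIntegral.intervalIntegrable_rpow' (by
              rw [neg_lt_neg_iff]
              calc 1/p < 1 := by rw [div_lt_one hp0]; exact hp
                _ ≤ 1 := le_refl 1)).1
          · apply (ae_restrict_iff' measurableSet_Ioc).2
            exact Filter.Eventually.of_forall fun x hx => Real.rpow_nonneg hx.1.le _
      _ = ENNReal.ofReal (p/(p-1)) := by
          congr 1
          rw [← intervalIntegral.integral_of_le zero_le_one,
            integral_rpow (Or.inl (by
              rw [neg_lt, neg_neg]
              rw [div_lt_one hp0]; exact hp))]
          rw [Real.one_rpow, Real.zero_rpow (by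
            intro h
            have : 1/p = 1 := by linarith
            rw [div_eq_one_iff_eq (ne_of_gt hp0)] at this
            exact absurd this.symm (ne_of_gt hp))]
          rw [div_eq_div_iff (by
            intro h
            have : 1/p = 1 := by linarith
            rw [div_eq_one_iff_eq (ne_of_gt hp0)] at this
            exact absurd this.symm (ne_of_gt hp)) (by intro h; exact absurd (by linarith : p = 1) (ne_of_gt hp))]
          field_simp
          ring
  -- Step 2 : pointwise Young bound on (1, ∞)
  have hyoung : ∀ x ∈ Ioi (1:ℝ), f x ≤ g₁ x + g₂ x := by
    intro x hx
    have hx0 : (0:ℝ) < x := lt_trans one_pos hx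
    have hK0 : (0:ℝ) < 1 + (x + t)^2 := by positivity
    have key : 1 / (x ^ (1/p) * (1 + (x + t)^2) ^ (1/q)) ≤
        (q-1)/(q+1) * x ^ (-((q+1)/q)) + 2/(q+1) * (1 + (x + t)^2) ^ (-((q+1)/(2*q))) := by
      have h1 : 1 / (x ^ (1/p) * (1 + (x + t)^2) ^ (1/q)) =
          x ^ (-(1/p)) * (1 + (x + t)^2) ^ (-(1/q)) := by
        rw [one_div, mul_inv, ← Real.rpow_neg hx0.le, ← Real.rpow_neg hK0.le]
      rw [h1]
      have hY := Real.young_inequality_of_nonneg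
        (Real.rpow_nonneg hx0.le (-(1/p))) (Real.rpow_nonneg hK0.le (-(1/q))) hconj
      have hq0' : q ≠ 0 := ne_of_gt hq0
      have e1 : (x ^ (-(1/p))) ^ ((q+1)/(q-1)) = x ^ (-((q+1)/q)) := by
        rw [← Real.rpow_mul hx0.le,
          show (-(1/p)) * ((q+1)/(q-1)) = -((q+1)/q) by
            rw [hinvp, neg_mul, neg_inj, div_mul_div_comm, mul_comm q (q-1),
              mul_div_mul_left _ _ hq1]]
      have e2 : ((1 + (x + t)^2) ^ (-(1/q))) ^ ((q+1)/2) =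
          (1 + (x + t)^2) ^ (-((q+1)/(2*q))) := by
        rw [← Real.rpow_mul hK0.le,
          show (-(1/q)) * ((q+1)/2) = -((q+1)/(2*q)) by
            rw [neg_mul, neg_inj, div_mul_div_comm, one_mul, mul_comm q 2]]
      rw [e1, e2] at hY
      calc x ^ (-(1/p)) * (1 + (x + t)^2) ^ (-(1/q)) ≤
          x ^ (-((q+1)/q)) / ((q+1)/(q-1)) + (1 + (x + t)^2) ^ (-((q+1)/(2*q))) / ((q+1)/2) := hY
        _ = (q-1)/(q+1) * x ^ (-((q+1)/q)) + 2/(q+1) * (1 + (x + t)^2) ^ (-((q+1)/(2*q))) := by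
            rw [div_div_eq_mul_div, div_div_eq_mul_div]
            ring
    calc f x ≤ ENNReal.ofReal ((q-1)/(q+1) * x ^ (-((q+1)/q)) +
        2/(q+1) * (1 + (x + t)^2) ^ (-((q+1)/(2*q)))) := ENNReal.ofReal_le_ofReal key
      _ = g₁ x + g₂ x := by
          rw [ENNReal.ofReal_add]
          · apply mul_nonneg
            · apply div_nonneg <;> linarith
            · exact Real.rpow_nonneg hx0.le _
          · apply mul_nonneg
            · apply div_nonneg <;> linarith
            · exact Real.rpow_nonneg hK0.le _
  -- Step 2a : integral of g₁ over (1,∞)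
  have piece2a : ∫⁻ x in Ioi (1:ℝ), g₁ x = ENNReal.ofReal ((q-1)/(q+1) * q) := by
    have hexp : -((q+1)/q) < -1 := by
      rw [neg_lt_neg_iff, lt_div_iff₀ hq0]; linarith
    rw [← ofReal_integral_eq_lintegral_ofReal]
    · congr 1
      rw [integral_const_mul, integral_Ioi_rpow_of_lt hexp one_pos, Real.one_rpow]
      congr 1
      have he : -((q+1)/q) + 1 = -(1/q) := by
        have : (q+1)/q = 1/q + 1 := by
          rw [add_div, div_self (ne_of_gt hq0)]; ring
        rw [this]; ring
      rw [he, neg_div_neg_eq, one_div_one_div]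
    · exact (integrableOn_Ioi_rpow_of_lt hexp one_pos).const_mul _
    · apply (ae_restrict_iff' measurableSet_Ioi).2
      apply Filter.Eventually.of_forall
      intro x hx
      apply mul_nonneg (div_nonneg (by linarith) (by linarith))
      exact Real.rpow_nonneg (le_trans zero_le_one (le_of_lt hx)) _
  -- Step 2b : integral of g₂ over (1,∞) is at most c₂ * I
  have piece2b : ∫⁻ x in Ioi (1:ℝ), g₂ x ≤
      ENNReal.ofReal (2/(q+1)) *
        ∫⁻ x : ℝ, ENNReal.ofReal (1 / (1 + x^2) ^ ((q + 1) / (2*q))) := by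
    have hc2 : (0:ℝ) ≤ 2/(q+1) := by positivity
    have hrw : ∀ x : ℝ, g₂ x = ENNReal.ofReal (2/(q+1)) *
        ENNReal.ofReal ((1 + (x + t)^2) ^ (-((q+1)/(2*q)))) := by
      intro x
      rw [hg₂, ← ENNReal.ofReal_mul hc2]
    calc ∫⁻ x in Ioi (1:ℝ), g₂ x
        = ENNReal.ofReal (2/(q+1)) *
          ∫⁻ x in Ioi (1:ℝ), ENNReal.ofReal ((1 + (x + t)^2) ^ (-((q+1)/(2*q)))) := by
          simp_rw [hrw]
          exact lintegral_const_mul' _ _ ENNReal.ofReal_ne_top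
      _ ≤ ENNReal.ofReal (2/(q+1)) *
          ∫⁻ x : ℝ, ENNReal.ofReal ((1 + (x + t)^2) ^ (-((q+1)/(2*q)))) := by
          exact mul_le_mul_right (setLIntegral_le_lintegral _ _) _
      _ = ENNReal.ofReal (2/(q+1)) *
          ∫⁻ x : ℝ, ENNReal.ofReal ((1 + x^2) ^ (-((q+1)/(2*q)))) := by
          congr 1
          exact lintegral_add_right_eq_self
            (fun y => ENNReal.ofReal ((1 + y^2) ^ (-((q+1)/(2*q))))) t
      _ = ENNReal.ofReal (2/(q+1)) *
          ∫⁻ x : ℝ, ENNReal.ofReal (1 / (1 + x^2) ^ ((q + 1) / (2*q))) := by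
          congr 1
          apply lintegral_congr
          intro x
          congr 1
          rw [Real.rpow_neg (by positivity), one_div]
  -- Step 2 combined
  have piece2 : ∫⁻ x in Ioi (1:ℝ), f x ≤ ENNReal.ofReal ((q-1)/(q+1) * q) +
      ENNReal.ofReal (2/(q+1)) *
        ∫⁻ x : ℝ, ENNReal.ofReal (1 / (1 + x^2) ^ ((q + 1) / (2*q))) := by
    calc ∫⁻ x in Ioi (1:ℝ), f x ≤ ∫⁻ x in Ioi (1:ℝ), (g₁ x + g₂ x) :=
          setLIntegral_mono' measurableSet_Ioi hyoung
      _ = (∫⁻ x in Ioi (1:ℝ), g₁ x) + ∫⁻ x in Ioi (1:ℝ), g₂ x := lintegral_add_left hg₁m _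
      _ ≤ _ := by rw [piece2a]; exact add_le_add_right piece2b _
  -- put everything together
  have hsplit : ∫⁻ x in Ioi (0:ℝ), f x ≤
      (∫⁻ x in Ioc (0:ℝ) 1, f x) + ∫⁻ x in Ioi (1:ℝ), f x := by
    rw [← Ioc_union_Ioi_eq_Ioi (zero_le_one (α := ℝ))]
    exact lintegral_union_le _ _ _
  have hconst : p/(p-1) + (q-1)/(q+1) * q = 2 * p^2 / ((2*p - 1) * (p - 1)) := by
    have hq_eq : q = p / (p - 1) := by
      rw [eq_div_iff (by intro h; exact absurd (by linarith : p = 1) (ne_of_gt hp))]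
      nlinarith [hpq']
    have h1 : p - 1 ≠ 0 := by intro h; exact absurd (by linarith : p = 1) (ne_of_gt hp)
    have h3 : 2*p - 1 ≠ 0 := by intro h; nlinarith
    rw [div_mul_eq_mul_div, div_add_div _ _ h1 hq1', div_eq_div_iff (mul_ne_zero h1 hq1') (mul_ne_zero h3 h1)]
    linear_combination ((p-1)*(2*p-2-(1+q)*(2*p-1))) * hpq'
  calc ∫⁻ x in Ioi (0:ℝ), f x ≤ (∫⁻ x in Ioc (0:ℝ) 1, f x) + ∫⁻ x in Ioi (1:ℝ), f x := hsplit
    _ ≤ ENNReal.ofReal (p/(p-1)) + (ENNReal.ofReal ((q-1)/(q+1) * q) +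
        ENNReal.ofReal (2/(q+1)) *
          ∫⁻ x : ℝ, ENNReal.ofReal (1 / (1 + x^2) ^ ((q + 1) / (2*q)))) :=
        add_le_add piece1 piece2
    _ = (ENNReal.ofReal (p/(p-1)) + ENNReal.ofReal ((q-1)/(q+1) * q)) +
        ENNReal.ofReal (2/(q+1)) *
          ∫⁻ x : ℝ, ENNReal.ofReal (1 / (1 + x^2) ^ ((q + 1) / (2*q))) := by
        rw [← add_assoc]
    _ = ENNReal.ofReal (2 * p^2 / ((2*p - 1) * (p - 1))) +
        ENNReal.ofReal (2/(q+1)) *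
          ∫⁻ x : ℝ, ENNReal.ofReal (1 / (1 + x^2) ^ ((q + 1) / (2*q))) := by
        rw [← ENNReal.ofReal_add (div_nonneg (by linarith) (by linarith)) (by
          apply mul_nonneg (div_nonneg (by linarith) (by linarith)) (by linarith)), hconst]
end

section
/- Let ε > 0 and ℓ > 0, and let Ω : (0,ε) × [0,2π] → ℝ be a nonnegative measurable function such that for all r ∈ (0,ε), ∫₀^{2π} Ω(r,θ) · r dθ ≥ ℓ. Then ∫₀^ε ∫₀^{2π} Ω(r,θ)² dθ · r dr = ∞. -/
open MeasureTheory Set Real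

theorem stmt6 (ε ℓ : ℝ) (hε : 0 < ε) (hℓ : 0 < ℓ)
    (Ω : ℝ → ℝ → ℝ) (hmeas : Measurable (Function.uncurry Ω))
    (hnonneg : ∀ r θ, 0 ≤ Ω r θ)
    (hlen : ∀ r ∈ Ioo 0 ε,
      ENNReal.ofReal ℓ ≤ ∫⁻ θ in Ioc (0:ℝ) (2*π), ENNReal.ofReal (Ω r θ * r)) :
    ∫⁻ r in Ioo 0 ε,
        (∫⁻ θ in Ioc (0:ℝ) (2*π), ENNReal.ofReal ((Ω r θ)^2)) * ENNReal.ofReal r = ⊤ := by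
  have hπ : (0:ℝ) < π := Real.pi_pos
  set c : ℝ := ℓ^2 / (2*π) with hc
  have hcpos : 0 < c := div_pos (pow_pos hℓ 2) (by linarith)
  -- pointwise lower bound via Cauchy-Schwarz
  have key : ∀ r ∈ Ioo (0:ℝ) ε,
      ENNReal.ofReal (c / r) ≤
        (∫⁻ θ in Ioc (0:ℝ) (2*π), ENNReal.ofReal ((Ω r θ)^2)) * ENNReal.ofReal r := by
    intro r hr
    obtain ⟨hr0, hrε⟩ := hr
    set μ := volume.restrict (Ioc (0:ℝ) (2*π))
    set A := ∫⁻ θ in Ioc (0:ℝ) (2*π), ENNReal.ofReal ((Ω r θ)^2) with hA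
    have hΩr : Measurable (Ω r) := hmeas.of_uncurry_left
    have hpq : (2:ℝ).HolderConjugate 2 := Real.HolderConjugate.two_two
    have holder := ENNReal.lintegral_mul_le_Lp_mul_Lq μ hpq
      (f := fun θ => ENNReal.ofReal (Ω r θ)) (g := fun _ => ENNReal.ofReal r)
      (hΩr.ennreal_ofReal).aemeasurable measurable_const.aemeasurable
    simp only [Pi.mul_apply] at holder
    have hfg : (∫⁻ θ, ENNReal.ofReal (Ω r θ) * ENNReal.ofReal r ∂μ)
        = ∫⁻ θ in Ioc (0:ℝ) (2*π), ENNReal.ofReal (Ω r θ * r) := by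
      refine lintegral_congr fun θ => ?_
      rw [ENNReal.ofReal_mul (hnonneg r θ)]
    have hf2 : (∫⁻ θ, (ENNReal.ofReal (Ω r θ)) ^ (2:ℝ) ∂μ) = A := by
      refine lintegral_congr fun θ => ?_
      rw [show ((2:ℝ) = ((2:ℕ):ℝ)) by norm_num, ENNReal.rpow_natCast,
        ← ENNReal.ofReal_pow (hnonneg r θ)]
    have hμuniv : μ Set.univ = ENNReal.ofReal (2*π) := by
      simp [μ, Real.volume_Ioc]
    have hg2 : (∫⁻ _ : ℝ, (ENNReal.ofReal r) ^ (2:ℝ) ∂μ) = ENNReal.ofReal (2*π*r^2) := by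
      rw [lintegral_const, hμuniv, show ((2:ℝ) = ((2:ℕ):ℝ)) by norm_num,
        ENNReal.rpow_natCast, ← ENNReal.ofReal_pow hr0.le,
        ← ENNReal.ofReal_mul (by positivity)]
      congr 1
      ring
    rw [hfg, hf2, hg2] at holder
    have h1 : ENNReal.ofReal ℓ ≤ (A * ENNReal.ofReal (2*π*r^2)) ^ ((1:ℝ)/2) := by
      refine (hlen r ⟨hr0, hrε⟩).trans (holder.trans (le_of_eq ?_))
      rw [ENNReal.mul_rpow_of_nonneg _ _ (by norm_num : (0:ℝ) ≤ 1/2)]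
    have h2 : ENNReal.ofReal (ℓ^2) ≤ A * ENNReal.ofReal (2*π*r^2) :=
      calc ENNReal.ofReal (ℓ^2) = (ENNReal.ofReal ℓ) ^ (2:ℝ) := by
            rw [show ((2:ℝ) = ((2:ℕ):ℝ)) by norm_num, ENNReal.rpow_natCast,
              ENNReal.ofReal_pow hℓ.le]
        _ ≤ ((A * ENNReal.ofReal (2*π*r^2)) ^ ((1:ℝ)/2)) ^ (2:ℝ) :=
            ENNReal.rpow_le_rpow h1 (by norm_num)
        _ = A * ENNReal.ofReal (2*π*r^2) := by
            rw [← ENNReal.rpow_mul]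
            norm_num
    calc ENNReal.ofReal (c / r)
        = ENNReal.ofReal (ℓ^2) * ENNReal.ofReal (r / (2*π*r^2)) := by
          rw [← ENNReal.ofReal_mul (by positivity)]
          congr 1
          field_simp [hc]
          rw [hc]; field_simp
      _ ≤ (A * ENNReal.ofReal (2*π*r^2)) * ENNReal.ofReal (r / (2*π*r^2)) :=
          mul_le_mul_left h2 _
      _ = A * ENNReal.ofReal r := by
          rw [mul_assoc, ← ENNReal.ofReal_mul (by positivity)]
          congr 2
          field_simp
  -- the comparison integral diverges
  have hdiv : ∫⁻ r in Ioo (0:ℝ) ε, ENNReal.ofReal (c / r) = ⊤ := by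
    by_contra h
    have hm : AEStronglyMeasurable (fun r : ℝ => c / r) (volume.restrict (Ioo 0 ε)) :=
      (measurable_const.div measurable_id).aestronglyMeasurable
    have hpos : 0 ≤ᵐ[volume.restrict (Ioo (0:ℝ) ε)] fun r => c / r := by
      filter_upwards [ae_restrict_mem measurableSet_Ioo] with r hr
      exact div_nonneg hcpos.le hr.1.le
    have hint : Integrable (fun r : ℝ => c / r) (volume.restrict (Ioo 0 ε)) :=
      (lintegral_ofReal_ne_top_iff_integrable hm hpos).mp h
    have hint2 : IntegrableOn (fun r : ℝ => r ^ (-1:ℝ)) (Ioo 0 ε) := by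
      have : IntegrableOn (fun r : ℝ => c⁻¹ * (c / r)) (Ioo 0 ε) := hint.const_mul _
      refine this.congr_fun (fun r hr => ?_) measurableSet_Ioo
      rw [Real.rpow_neg hr.1.le, Real.rpow_one]
      field_simp
    rw [intervalIntegral.integrableOn_Ioo_rpow_iff hε] at hint2
    linarith
  refine top_le_iff.mp ?_
  rw [← hdiv]
  exact setLIntegral_mono' measurableSet_Ioo key
end

section
/- Let m ≥ 1 be an integer and s > m real. There is a constant B > 0 depending only on m and s such that for every t ∈ ℝ, ∫₀^∞ dρ / (ρ^((m-1)/(s-1)) · (1 + (ρ+t)²)^((s-m)/(s-1))) ≤ B. -/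
open MeasureTheory Set

private lemma aux_lt_top {f : ℝ → ℝ} {s : Set ℝ} (hf : IntegrableOn f s) :
    ∫⁻ x in s, ENNReal.ofReal (f x) < ⊤ :=
  hf.lintegral_lt_top

/-- Finiteness of the basic integral `∫₀^∞ x^{-a} (1+x²)^{-b}`. -/
private lemma aux_J (a b : ℝ) (ha0 : 0 ≤ a) (ha1 : a < 1) (hb : 0 < b) (hab : a + b = 1) :
    ∫⁻ x in Ioi (0:ℝ), ENNReal.ofReal (1 / (x ^ a * (1 + x ^ 2) ^ b)) < ⊤ := by
  have hsplit : Ioi (0:ℝ) = Ioc (0:ℝ) 1 ∪ Ioi (1:ℝ) := (Ioc_union_Ioi_eq_Ioi zero_le_one).symm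
  rw [hsplit, lintegral_union measurableSet_Ioi (Ioc_disjoint_Ioi le_rfl)]
  have h1 : ∫⁻ x in Ioc (0:ℝ) 1, ENNReal.ofReal (1 / (x ^ a * (1 + x ^ 2) ^ b)) < ⊤ := by
    have hle : ∀ x ∈ Ioc (0:ℝ) 1,
        ENNReal.ofReal (1 / (x ^ a * (1 + x ^ 2) ^ b)) ≤ ENNReal.ofReal (x ^ (-a)) := by
      intro x hx
      have hx0 : (0:ℝ) < x := hx.1
      apply ENNReal.ofReal_le_ofReal
      rw [Real.rpow_neg hx0.le, inv_eq_one_div]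
      have h2 : (1:ℝ) ≤ (1 + x ^ 2) ^ b :=
        Real.one_le_rpow (by nlinarith [sq_nonneg x]) hb.le
      have hxa : (0:ℝ) < x ^ a := Real.rpow_pos_of_pos hx0 a
      apply one_div_le_one_div_of_le hxa
      nlinarith
    refine lt_of_le_of_lt (setLIntegral_mono (by fun_prop) hle) ?_
    apply aux_lt_top
    have : IntervalIntegrable (fun x : ℝ => x ^ (-a)) volume 0 1 :=
      intervalIntegral.intervalIntegrable_rpow' (by linarith)
    exact (intervalIntegrable_iff_integrableOn_Ioc_of_le zero_le_one).mp this
  have h2 : ∫⁻ x in Ioi (1:ℝ), ENNReal.ofReal (1 / (x ^ a * (1 + x ^ 2) ^ b)) < ⊤ := by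
    have hle : ∀ x ∈ Ioi (1:ℝ),
        ENNReal.ofReal (1 / (x ^ a * (1 + x ^ 2) ^ b)) ≤ ENNReal.ofReal (x ^ (-(1 + b))) := by
      intro x hx
      have hx1 : (1:ℝ) < x := hx
      have hx0 : (0:ℝ) < x := lt_trans one_pos hx1
      apply ENNReal.ofReal_le_ofReal
      rw [Real.rpow_neg hx0.le, inv_eq_one_div]
      have key : x ^ (1 + b) ≤ x ^ a * (1 + x ^ 2) ^ b := by
        have e1 : x ^ (1 + b) = x ^ a * x ^ (2 * b) := by
          rw [← Real.rpow_add hx0]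
          congr 1
          linarith
        rw [e1]
        have e2 : x ^ (2 * b) = ((x ^ 2 : ℝ)) ^ b := by
          rw [show (2:ℝ) * b = ((2:ℕ):ℝ) * b by norm_num, Real.rpow_mul hx0.le,
            Real.rpow_natCast]
        have h3 : x ^ (2 * b) ≤ (1 + x ^ 2) ^ b := by
          rw [e2]
          exact Real.rpow_le_rpow (by positivity) (by nlinarith) hb.le
        nlinarith [Real.rpow_pos_of_pos hx0 a, Real.rpow_pos_of_pos hx0 (2*b)]
      exact one_div_le_one_div_of_le (Real.rpow_pos_of_pos hx0 _) key
    refine lt_of_le_of_lt (setLIntegral_mono (by fun_prop) hle) ?_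
    exact aux_lt_top (integrableOn_Ioi_rpow_of_lt (by linarith) one_pos)
  exact ENNReal.add_lt_top.mpr ⟨h1, h2⟩

theorem stmt10 (m : ℕ) (hm : 1 ≤ m) (s : ℝ) (hs : (m : ℝ) < s) :
    ∃ B : ℝ, 0 < B ∧ ∀ t : ℝ,
      ∫⁻ ρ in Ioi (0:ℝ), ENNReal.ofReal
          (1 / (ρ ^ ((m - 1 : ℝ)/(s - 1)) * (1 + (ρ + t)^2) ^ ((s - m)/(s - 1)))) ≤
        ENNReal.ofReal B := by
  have hm1 : (1:ℝ) ≤ (m:ℝ) := by exact_mod_cast hm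
  have hs1 : (1:ℝ) < s := lt_of_le_of_lt hm1 hs
  set a : ℝ := ((m:ℝ) - 1) / (s - 1) with ha_def
  set b : ℝ := (s - (m:ℝ)) / (s - 1) with hb_def
  have ha0 : 0 ≤ a := div_nonneg (by linarith) (by linarith)
  have ha1 : a < 1 := by
    rw [ha_def, div_lt_one (by linarith)]; linarith
  have hb : 0 < b := div_pos (by linarith) (by linarith)
  have hab : a + b = 1 := by
    rw [ha_def, hb_def, ← add_div, div_eq_one_iff_eq (by linarith : s - 1 ≠ 0)]
    ring
  -- the even reference function
  set g : ℝ → ENNReal := fun x => ENNReal.ofReal (1 / (|x| ^ a * (1 + x ^ 2) ^ b)) with hg_def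
  have hg_meas : Measurable g := by fun_prop
  -- J : the integral over Ioi 0
  set J : ENNReal := ∫⁻ x in Ioi (0:ℝ), ENNReal.ofReal (1 / (x ^ a * (1 + x ^ 2) ^ b)) with hJ_def
  have hJ : J < ⊤ := aux_J a b ha0 ha1 hb hab
  -- g restricted to Ioi 0 agrees with the integrand of J
  have hgJ : ∫⁻ x in Ioi (0:ℝ), g x = J := by
    apply setLIntegral_congr_fun measurableSet_Ioi
    intro x (hx : 0 < x)
    rw [hg_def]
    simp only [abs_of_pos hx]
  -- g is even
  have hg_even : ∀ x : ℝ, g (-x) = g x := by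
    intro x; simp [hg_def, abs_neg, neg_pow]
  -- total integral of g over ℝ is ≤ 2 J
  have hgR : ∫⁻ x, g x ≤ 2 * J := by
    have hsplit : ∫⁻ x, g x = (∫⁻ x in Iio (0:ℝ), g x) + ∫⁻ x in Ici (0:ℝ), g x := by
      rw [← lintegral_union measurableSet_Ici (Iio_disjoint_Ici le_rfl), Iio_union_Ici,
        Measure.restrict_univ]
    have hIci : ∫⁻ x in Ici (0:ℝ), g x = J := by
      rw [← hgJ]
      exact (setLIntegral_congr (Ioi_ae_eq_Ici (a := (0:ℝ)))).symm
    have hIio : ∫⁻ x in Iio (0:ℝ), g x = J := by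
      have hneg : MeasurePreserving (fun x : ℝ => -x) volume volume :=
        Measure.measurePreserving_neg _
      calc ∫⁻ x in Iio (0:ℝ), g x
          = ∫⁻ x, (Iio (0:ℝ)).indicator g x := (lintegral_indicator measurableSet_Iio g).symm
        _ = ∫⁻ x, (Iio (0:ℝ)).indicator g (-x) :=
            (hneg.lintegral_comp (hg_meas.indicator measurableSet_Iio)).symm
        _ = ∫⁻ x, (Ioi (0:ℝ)).indicator g x := by
            congr 1
            ext x
            by_cases hx : 0 < x
            · have h1 : -x ∈ Iio (0:ℝ) := mem_Iio.mpr (by linarith)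
              have h2 : x ∈ Ioi (0:ℝ) := mem_Ioi.mpr hx
              rw [indicator_of_mem h1 g, indicator_of_mem h2 g, hg_even]
            · have h1 : -x ∉ Iio (0:ℝ) := by simp only [mem_Iio]; push_neg at hx ⊢; linarith
              have h2 : x ∉ Ioi (0:ℝ) := by simpa using hx
              rw [indicator_of_notMem h1 g, indicator_of_notMem h2 g]
        _ = ∫⁻ x in Ioi (0:ℝ), g x := lintegral_indicator measurableSet_Ioi g
        _ = J := hgJ
    rw [hsplit, hIio, hIci, two_mul]
  -- choose B
  refine ⟨(3 * J).toReal + 1, by positivity, fun t => ?_⟩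
  -- pointwise a.e. bound on Ioi 0
  have key : ∫⁻ ρ in Ioi (0:ℝ), ENNReal.ofReal
      (1 / (ρ ^ a * (1 + (ρ + t)^2) ^ b)) ≤
      ∫⁻ ρ in Ioi (0:ℝ), (ENNReal.ofReal (1 / (ρ ^ a * (1 + ρ ^ 2) ^ b)) + g (ρ + t)) := by
    apply lintegral_mono_ae
    have hnull : (volume.restrict (Ioi (0:ℝ))) {-t} = 0 :=
      le_antisymm (le_trans (Measure.restrict_le_self _) (by simp)) zero_le
    filter_upwards [measure_eq_zero_iff_ae_notMem.mp hnull, ae_restrict_mem measurableSet_Ioi]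
      with ρ hρt hρ
    have hρ0 : (0:ℝ) < ρ := hρ
    have hρt0 : ρ + t ≠ 0 := by
      intro h
      exact hρt (by simp [mem_singleton_iff]; linarith)
    have habs : 0 < |ρ + t| := abs_pos.mpr hρt0
    rcases le_or_gt ρ |ρ + t| with hle | hlt
    · -- first term dominates
      refine le_trans ?_ le_self_add
      apply ENNReal.ofReal_le_ofReal
      apply one_div_le_one_div_of_le (by positivity)
      have h1 : (1 + ρ ^ 2) ^ b ≤ (1 + (ρ + t) ^ 2) ^ b := by
        apply Real.rpow_le_rpow (by positivity) _ hb.le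
        have : ρ ^ 2 ≤ (ρ + t) ^ 2 := by
          rw [← sq_abs (ρ + t)]
          exact pow_le_pow_left₀ hρ0.le hle 2
        linarith
      have := Real.rpow_pos_of_pos hρ0 a
      nlinarith
    · -- second term dominates
      refine le_trans ?_ le_add_self
      rw [hg_def]
      apply ENNReal.ofReal_le_ofReal
      apply one_div_le_one_div_of_le (by positivity)
      have h1 : |ρ + t| ^ a ≤ ρ ^ a := Real.rpow_le_rpow (abs_nonneg _) hlt.le ha0
      have := Real.rpow_pos_of_pos (show (0:ℝ) < 1 + (ρ+t)^2 by positivity) b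
      nlinarith
  -- assemble
  have h2 : ∫⁻ ρ in Ioi (0:ℝ), (ENNReal.ofReal (1 / (ρ ^ a * (1 + ρ ^ 2) ^ b)) + g (ρ + t))
      ≤ 3 * J := by
    rw [lintegral_add_left (by fun_prop)]
    have hshift : ∫⁻ ρ in Ioi (0:ℝ), g (ρ + t) ≤ 2 * J := by
      refine le_trans (setLIntegral_le_lintegral _ _) ?_
      rw [lintegral_add_right_eq_self g t]
      exact hgR
    calc J + ∫⁻ ρ in Ioi (0:ℝ), g (ρ + t) ≤ J + 2 * J := add_le_add le_rfl hshift
      _ = 3 * J := by ring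
  refine le_trans (le_trans key h2) ?_
  have hfin : 3 * J ≠ ⊤ := ENNReal.mul_ne_top (by simp) hJ.ne
  calc 3 * J = ENNReal.ofReal ((3 * J).toReal) := (ENNReal.ofReal_toReal hfin).symm
    _ ≤ ENNReal.ofReal ((3 * J).toReal + 1) := ENNReal.ofReal_le_ofReal (by linarith)
end
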